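/- Let μ > 0, 0 < d < 1/2, and r ∈ ℝ. Consider the objective h(w, z) = (1/2)(w − r)² + μz + d(w²/z − w²) with the conventions 0²/0 = 0 and w²/0 = +∞ for w ≠ 0. Then the infimum of h over the constrained set {(w, z) ∈ ℝ × [0,1] : |w| ≥ √(2μ)z and |r − w| ≤ √(2μ)(1 − z)} equals the infimum of h over the unconstrained set ℝ × [0,1]; that is, the constraints |w| ≥ √(2μ)z and |r − w| ≤ √(2μ)(1 − z) are redundant, and both infima equal φ̄(r; d). -/

import Mathlib

/-- The perspective-relaxation loss φ̄(r; d) for parameters μ > 0, d ∈ (0,1/2). -/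
noncomputable def phiBar (mu d r : ℝ) : ℝ :=
  if |r| ≤ 2 * Real.sqrt (mu * d) then (1/2) * r^2
  else if |r| < Real.sqrt (mu / d) then
    (-(d * r^2) + 2 * Real.sqrt (mu * d) * |r| - 2 * mu * d) / (1 - 2*d)
  else mu

/-- The objective h(w,z) = (1/2)(w−r)² + μz + d(w²/z − w²), EReal-valued,
with the conventions h(0,0) = (1/2)r² and h(w,0) = +∞ for w ≠ 0. -/
noncomputable def hObj (mu d r w z : ℝ) : EReal :=
  if z = 0 then (if w = 0 then (((1/2) * (w - r)^2 : ℝ) : EReal) else ⊤)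
  else (((1/2) * (w - r)^2 + mu * z + d * (w^2 / z - w^2) : ℝ) : EReal)

/-- the constraints |w| ≥ √(2μ)z and |r − w| ≤ √(2μ)(1 − z) are
redundant: the constrained and unconstrained infima of h over ℝ × [0,1]
coincide, and both equal φ̄(r; d). -/

lemma sq_a (mu d : ℝ) (hmu : 0 < mu) (hd0 : 0 < d) :
    (2*Real.sqrt (mu*d))^2 = 4*(mu*d) := by
  rw [mul_pow, Real.sq_sqrt (by positivity)]; ring

lemma dM2 (mu d : ℝ) (hmu : 0 < mu) (hd0 : 0 < d) :
    d*(Real.sqrt (mu/d))^2 = mu := by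
  rw [Real.sq_sqrt (by positivity)]; field_simp

lemma a_eq_2dM (mu d : ℝ) (hmu : 0 < mu) (hd0 : 0 < d) :
    2*Real.sqrt (mu*d) = 2*d*(Real.sqrt (mu/d)) := by
  have h : d * Real.sqrt (mu/d) = Real.sqrt (mu*d) := by
    rw [← Real.sqrt_sq hd0.le, ← Real.sqrt_mul (sq_nonneg d)]
    congr 1; simp only [Real.sqrt_sq hd0.le]; field_simp
  linarith

lemma G_ge (mu d r t : ℝ) (hmu : 0 < mu) (hd0 : 0 < d) (hd : d < 1/2) (ht : 0 ≤ t)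
    (htM : t ≤ Real.sqrt (mu/d)) :
    phiBar mu d r ≤ 1/2*(t - |r|)^2 + 2*Real.sqrt (mu*d)*t - d*t^2 := by
  have ha2 := sq_a mu d hmu hd0
  have hM2 := dM2 mu d hmu hd0
  have haM := a_eq_2dM mu d hmu hd0
  have hMpos : 0 < Real.sqrt (mu/d) := Real.sqrt_pos.2 (by positivity)
  have h12 : 0 < 1 - 2*d := by linarith
  have hrabs : 0 ≤ |r| := abs_nonneg r
  unfold phiBar
  split_ifs with h1 h2
  · nlinarith [sq_abs r]
  · rw [div_le_iff₀ h12]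
    nlinarith [sq_nonneg ((1-2*d)*t - (|r| - 2*Real.sqrt (mu*d))), sq_abs r]
  · push_neg at h2
    have h1' : (Real.sqrt (mu/d) - t)^2 ≤ (t - |r|)^2 := by nlinarith
    nlinarith [sq_nonneg (t - Real.sqrt (mu/d))]

lemma phiBar_le_mu (mu d r : ℝ) (hmu : 0 < mu) (hd0 : 0 < d) (hd : d < 1/2) :
    phiBar mu d r ≤ mu := by
  have ha2 := sq_a mu d hmu hd0
  have hM2 := dM2 mu d hmu hd0
  have haM := a_eq_2dM mu d hmu hd0
  have h12 : 0 < 1 - 2*d := by linarith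
  have hrabs : 0 ≤ |r| := abs_nonneg r
  unfold phiBar
  split_ifs with h1 h2
  · nlinarith [sq_abs r, Real.sqrt_nonneg (mu*d)]
  · rw [div_le_iff₀ h12]
    nlinarith [sq_nonneg (|r| - Real.sqrt (mu/d)), sq_abs r]
  · exact le_refl _

lemma phiBar_le_halfsq (mu d r : ℝ) (hmu : 0 < mu) (hd0 : 0 < d) (hd : d < 1/2) :
    phiBar mu d r ≤ 1/2*r^2 := by
  have ha2 := sq_a mu d hmu hd0
  have hM2 := dM2 mu d hmu hd0
  have h12 : 0 < 1 - 2*d := by linarith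
  have hrabs : 0 ≤ |r| := abs_nonneg r
  have hMpos : 0 < Real.sqrt (mu/d) := Real.sqrt_pos.2 (by positivity)
  unfold phiBar
  split_ifs with h1 h2
  · exact le_refl _
  · rw [div_le_iff₀ h12]
    nlinarith [sq_nonneg (|r| - 2*Real.sqrt (mu*d)), sq_abs r]
  · push_neg at h2
    nlinarith [sq_abs r]

lemma amgm (x y : ℝ) (hx : 0 ≤ x) (hy : 0 ≤ y) : 2*Real.sqrt (x*y) ≤ x + y := by
  nlinarith [sq_nonneg (Real.sqrt x - Real.sqrt y), Real.sq_sqrt hx, Real.sq_sqrt hy,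
    Real.sqrt_mul hx y, Real.sqrt_nonneg x, Real.sqrt_nonneg y]

lemma key1 (mu d t z : ℝ) (hmu : 0 < mu) (hd0 : 0 < d) (ht : 0 ≤ t) (hz : 0 < z) :
    2*Real.sqrt (mu*d)*t ≤ mu*z + d*t^2/z := by
  have h := amgm (mu*z) (d*t^2/z) (by positivity) (by positivity)
  have he : (mu*z)*(d*t^2/z) = (mu*d)*t^2 := by field_simp
  rw [he, Real.sqrt_mul (by positivity), Real.sqrt_sq ht] at h
  linarith
lemma hObj_lower (mu d r w z : ℝ) (hmu : 0 < mu) (hd0 : 0 < d) (hd : d < 1/2)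
    (hz0 : 0 ≤ z) (hz1 : z ≤ 1) :
    ((phiBar mu d r : ℝ) : EReal) ≤ hObj mu d r w z := by
  unfold hObj
  split_ifs with hz hw
  · rw [EReal.coe_le_coe_iff]
    subst hw
    nlinarith [phiBar_le_halfsq mu d r hmu hd0 hd]
  · exact le_top
  · rw [EReal.coe_le_coe_iff]
    have hz' : 0 < z := lt_of_le_of_ne hz0 (Ne.symm hz)
    have ht : 0 ≤ |w| := abs_nonneg w
    have hw2 : w^2 = |w|^2 := (sq_abs w).symm
    have hwr : (|w| - |r|)^2 ≤ (w - r)^2 := by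
      have h := abs_abs_sub_abs_le_abs_sub w r
      nlinarith [sq_abs (w - r), abs_nonneg (|w| - |r|), abs_nonneg (w-r),
        sq_abs (|w| - |r|)]
    by_cases htM : |w| ≤ Real.sqrt (mu/d)
    · have hg := G_ge mu d r |w| hmu hd0 hd ht htM
      have hk := key1 mu d |w| z hmu hd0 ht hz'
      have hdw : d*(w^2/z - w^2) = d*|w|^2/z - d*|w|^2 := by rw [hw2]; ring
      linarith
    · push_neg at htM
      have hM2 := dM2 mu d hmu hd0
      have hdt : mu ≤ d*|w|^2 := by
        have h2 := mul_self_lt_mul_self (Real.sqrt_nonneg (mu/d)) htM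
        nlinarith
      have key : mu ≤ mu*z + d*(w^2/z - w^2) := by
        have he : mu*z + d*(w^2/z - w^2) - mu = (1-z)*(d*w^2 - mu*z)/z := by
          field_simp; ring
        have hpos : 0 ≤ (1-z)*(d*w^2 - mu*z)/z := by
          apply div_nonneg _ hz'.le
          apply mul_nonneg (by linarith)
          nlinarith
        linarith
      nlinarith [phiBar_le_mu mu d r hmu hd0 hd, sq_nonneg (w - r)]
set_option maxHeartbeats 2000000 in
lemma att_nonneg (mu d r : ℝ) (hmu : 0 < mu) (hd0 : 0 < d) (hd : d < 1/2) (hr : 0 ≤ r) :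
    ∃ w z : ℝ, 0 ≤ z ∧ z ≤ 1 ∧
      Real.sqrt (2*mu) * z ≤ |w| ∧ |r - w| ≤ Real.sqrt (2*mu) * (1 - z) ∧
      hObj mu d r w z = ((phiBar mu d r : ℝ) : EReal) := by
  have ha2 := sq_a mu d hmu hd0
  have hM2 := dM2 mu d hmu hd0
  have haM := a_eq_2dM mu d hmu hd0
  have h12 : 0 < 1 - 2*d := by linarith
  have ha0 : 0 < 2*Real.sqrt (mu*d) := by positivity
  have hc0 : 0 < Real.sqrt (2*mu) := Real.sqrt_pos.2 (by positivity)
  have hMpos : 0 < Real.sqrt (mu/d) := Real.sqrt_pos.2 (by positivity)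
  have hasq : 2*Real.sqrt (mu*d) < Real.sqrt (2*mu) :=
    (Real.lt_sqrt ha0.le).2 (by rw [ha2]; linarith [mul_pos hmu h12])
  have habs : |r| = r := abs_of_nonneg hr
  rcases le_or_gt r (2*Real.sqrt (mu*d)) with h1 | h1
  · -- case r ≤ a: take w = 0, z = 0
    refine ⟨0, 0, le_refl 0, by norm_num, by simp, ?_, ?_⟩
    · simp only [sub_zero, mul_one, habs]; linarith
    · unfold hObj phiBar
      rw [if_pos rfl, if_pos rfl, if_pos (by rw [habs]; exact h1)]
      norm_num
  · rcases lt_or_ge r (Real.sqrt (mu/d)) with h2 | h2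
    · -- middle case
      set a := 2*Real.sqrt (mu*d) with ha_def
      set c := Real.sqrt (2*mu) with hc_def
      set M := Real.sqrt (mu/d) with hM_def
      set b := Real.sqrt (d/mu) with hb_def
      set e := Real.sqrt (2*d) with he_def
      have hb : 0 < b := Real.sqrt_pos.2 (by positivity)
      have hacMbe : True := trivial
      have hb2 : mu*b^2 = d := by rw [hb_def, Real.sq_sqrt (by positivity)]; field_simp
      have hab : a = 2*(mu*b) := by
        rw [ha_def, hb_def]
        have h : mu * Real.sqrt (d/mu) = Real.sqrt (mu*d) := by
          rw [← Real.sqrt_sq hmu.le, ← Real.sqrt_mul (sq_nonneg mu)]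
          congr 1; simp only [Real.sqrt_sq hmu.le]; field_simp
        linarith
      have he2 : e^2 = 2*d := Real.sq_sqrt (by positivity)
      have he0 : 0 < e := Real.sqrt_pos.2 (by positivity)
      have he1 : e < 1 := by linarith [sq_nonneg (e-1), he2, hd]
      have hcb : c*b = e := by
        rw [hc_def, hb_def, he_def, ← Real.sqrt_mul (by positivity)]
        congr 1; field_simp
      have hce : c*e = a := by
        rw [hc_def, he_def, ha_def, ← Real.sqrt_mul (by positivity)]
        rw [show (2*mu)*(2*d) = 2^2*(mu*d) by ring, Real.sqrt_mul (by positivity),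
          Real.sqrt_sq (by norm_num)]
      have heM : e*M = c := by
        rw [he_def, hM_def, hc_def, ← Real.sqrt_mul (by positivity)]
        congr 1; field_simp
      clear_value a c M b e
      set w0 := (r - a)/(1 - 2*d) with hw0_def
      have hw0 : 0 < w0 := div_pos (by linarith) h12
      set z0 := w0 * b with hz0_def
      have hz0 : 0 < z0 := mul_pos hw0 hb
      have hw0eq : w0*(1-2*d) = r - a := div_mul_cancel₀ _ h12.ne'
      clear_value w0 z0
      have hdM : d*r ≤ d*M := mul_le_mul_of_nonneg_left h2.le hd0.le
      have hw0M : w0 < M := by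
        rw [hw0_def, div_lt_iff₀ h12]; linarith [haM]
      have hMb : M*b = 1 := by
        rw [hM_def, hb_def, ← Real.sqrt_mul (by positivity),
          show mu/d*(d/mu) = 1 by field_simp]
        exact Real.sqrt_one
      have hz1 : z0 ≤ 1 := by
        rw [hz0_def]
        calc w0*b ≤ M*b := mul_le_mul_of_nonneg_right hw0M.le hb.le
        _ = 1 := hMb
      have habsw0 : |w0| = w0 := abs_of_pos hw0
      have hw0r : w0 ≤ r := by
        have h2dw0 : d*w0 ≤ d*M := mul_le_mul_of_nonneg_left hw0M.le hd0.le
        linarith [hw0eq, haM, h2dw0]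
      have herc : e*r ≤ c := by
        have := mul_lt_mul_of_pos_left h2 he0
        linarith [heM]
      refine ⟨w0, z0, hz0.le, hz1, ?_, ?_, ?_⟩
      · rw [habsw0, hz0_def]
        calc c*(w0*b) = (c*b)*w0 := by ring
        _ = e*w0 := by rw [hcb]
        _ ≤ 1*w0 := mul_le_mul_of_nonneg_right he1.le hw0.le
        _ = w0 := one_mul w0
      · rw [abs_of_nonneg (by linarith : (0:ℝ) ≤ r - w0)]
        have key : (r - w0 - c*(1 - z0))*(1-2*d) ≤ 0 := by
          have t1 : c*z0*(1-2*d) = e*(r-a) := by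
            rw [hz0_def, ← hcb, ← hw0eq]; ring
          have expand : (r - w0 - c*(1 - z0))*(1-2*d)
              = r*(1-2*d) - (r - a) - c*(1-2*d) + e*(r - a) := by
            linear_combination t1 - hw0eq
          have hexp2 : r*(1-2*d) - (r - a) - c*(1-2*d) + e*(r - a)
              = -((1-e)*(c - e*r)) := by linear_combination (e-1)*hce + (r-c)*he2
          rw [expand, hexp2]
          have := mul_nonneg (sub_nonneg.2 he1.le) (sub_nonneg.2 herc)
          linarith
        have hX : r - w0 - c*(1 - z0) ≤ 0 :=
          le_of_mul_le_mul_right (by linarith [key] :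
            (r - w0 - c*(1 - z0))*(1-2*d) ≤ 0*(1-2*d)) h12
        linarith
      · unfold hObj phiBar
        rw [if_neg hz0.ne']
        rw [if_neg (show ¬ |r| ≤ 2*Real.sqrt (mu*d) by
          rw [habs, ← ha_def]; push_neg; exact h1)]
        rw [if_pos (show |r| < Real.sqrt (mu/d) by rw [habs, ← hM_def]; exact h2)]
        rw [EReal.coe_eq_coe_iff, habs, ← ha_def]
        have hsimp : w0^2/z0 = w0/b := by
          rw [hz0_def]; field_simp
        have hd' : d = mu*b^2 := hb2.symm
        have ha' : a = 2*(mu*b) := hab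
        have h12' : (1 : ℝ) - 2*(mu*b^2) ≠ 0 := by rw [hb2]; exact h12.ne'
        rw [hsimp, hz0_def, hw0_def, ha', hd']
        have h12'' : (1 : ℝ) - 2*mu*b^2 ≠ 0 := by rw [mul_assoc]; exact h12'
        field_simp
        ring
    · -- case r ≥ M : w=r, z=1
      have haM' : 2*Real.sqrt (mu*d) < Real.sqrt (mu/d) := by
        linarith [haM, mul_pos h12 hMpos]
      refine ⟨r, 1, by norm_num, le_refl 1, ?_, by simp, ?_⟩
      · rw [mul_one, habs]
        calc Real.sqrt (2*mu) ≤ Real.sqrt (mu/d) := by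
              apply Real.sqrt_le_sqrt; rw [le_div_iff₀ hd0]; linarith [mul_pos hmu h12]
        _ ≤ r := h2
      · unfold hObj phiBar
        rw [if_neg one_ne_zero, if_neg (by rw [habs]; linarith),
          if_neg (by rw [habs]; push_neg; exact h2)]
        rw [EReal.coe_eq_coe_iff]
        norm_num
lemma phiBar_neg (mu d r : ℝ) : phiBar mu d (-r) = phiBar mu d r := by
  unfold phiBar; rw [abs_neg, neg_pow]; norm_num

lemma hObj_neg (mu d r w z : ℝ) : hObj mu d (-r) (-w) z = hObj mu d r w z := by
  unfold hObj
  by_cases hz : z = 0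
  · by_cases hw : w = 0
    · rw [if_pos hz, if_pos hz, hw]; norm_num
    · rw [if_pos hz, if_pos hz, if_neg hw, if_neg (neg_ne_zero.2 hw)]
  · rw [if_neg hz, if_neg hz]
    exact congrArg _ (by ring)

lemma att (mu d r : ℝ) (hmu : 0 < mu) (hd0 : 0 < d) (hd : d < 1/2) :
    ∃ w z : ℝ, 0 ≤ z ∧ z ≤ 1 ∧
      Real.sqrt (2*mu) * z ≤ |w| ∧ |r - w| ≤ Real.sqrt (2*mu) * (1 - z) ∧
      hObj mu d r w z = ((phiBar mu d r : ℝ) : EReal) := by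
  rcases le_or_gt 0 r with hr | hr
  · exact att_nonneg mu d r hmu hd0 hd hr
  · obtain ⟨w, z, hz0, hz1, hc1, hc2, hval⟩ :=
      att_nonneg mu d (-r) hmu hd0 hd (by linarith)
    refine ⟨-w, z, hz0, hz1, by rwa [abs_neg], ?_, ?_⟩
    · rwa [show r - -w = -((-r) - w) by ring, abs_neg]
    · rw [show (-w) = -w from rfl]
      calc hObj mu d r (-w) z = hObj mu d (-(-r)) (-w) z := by rw [neg_neg]
      _ = hObj mu d (-r) w z := hObj_neg mu d (-r) w z
      _ = ((phiBar mu d (-r) : ℝ) : EReal) := hval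
      _ = ((phiBar mu d r : ℝ) : EReal) := by rw [phiBar_neg]
theorem stmt_7 (mu d r : ℝ) (hmu : 0 < mu) (hd0 : 0 < d) (hd : d < 1/2) :
    sInf {v : EReal | ∃ w z : ℝ, 0 ≤ z ∧ z ≤ 1 ∧
        Real.sqrt (2*mu) * z ≤ |w| ∧ |r - w| ≤ Real.sqrt (2*mu) * (1 - z) ∧
        v = hObj mu d r w z}
      = sInf {v : EReal | ∃ w z : ℝ, 0 ≤ z ∧ z ≤ 1 ∧ v = hObj mu d r w z}
    ∧ sInf {v : EReal | ∃ w z : ℝ, 0 ≤ z ∧ z ≤ 1 ∧ v = hObj mu d r w z}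
      = ((phiBar mu d r : ℝ) : EReal) := by
  set S1 := {v : EReal | ∃ w z : ℝ, 0 ≤ z ∧ z ≤ 1 ∧
      Real.sqrt (2*mu) * z ≤ |w| ∧ |r - w| ≤ Real.sqrt (2*mu) * (1 - z) ∧
      v = hObj mu d r w z} with hS1
  set S2 := {v : EReal | ∃ w z : ℝ, 0 ≤ z ∧ z ≤ 1 ∧ v = hObj mu d r w z} with hS2
  have hsub : S1 ⊆ S2 := by
    rintro v ⟨w, z, hz0, hz1, _, _, hv⟩
    exact ⟨w, z, hz0, hz1, hv⟩
  have h21 : sInf S2 ≤ sInf S1 := sInf_le_sInf hsub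
  have hlow : ((phiBar mu d r : ℝ) : EReal) ≤ sInf S2 := by
    apply le_sInf
    rintro v ⟨w, z, hz0, hz1, hv⟩
    rw [hv]
    exact hObj_lower mu d r w z hmu hd0 hd hz0 hz1
  have hval : ((phiBar mu d r : ℝ) : EReal) ∈ S1 := by
    obtain ⟨w, z, hz0, hz1, hc1, hc2, hv⟩ := att mu d r hmu hd0 hd
    exact ⟨w, z, hz0, hz1, hc1, hc2, hv.symm⟩
  have h1le : sInf S1 ≤ ((phiBar mu d r : ℝ) : EReal) := sInf_le hval
  exact ⟨le_antisymm (le_trans h1le hlow) h21,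
    le_antisymm (le_trans h21 h1le) hlow⟩
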